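/- Let M > 0, |Q| < M, and define Υ(r) = 1 - 2M/r + Q^2/r^2, V_1(r) = (1/r^2)(1 - 2M/r + 6Q^2/r^2), and u the interpolating multiplier with r_P the trapping radius. Then -（1/2)·(u/r^2)·∂_r(Υ V_1) = (1/r^3)·(1 - r_P/r)·(1 + r_P/r + (Q^2/M^2)r_P^2/r^2)·(1 - 6M/r + 8M^2/r^2 + 14Q^2/r^2 - 35Q^2M/r^3 + 18Q^4/r^4) for all r > 0 with r ≠ 0 (interpreting both sides as rational functions). -/

import Mathlib

set_option maxHeartbeats 2000000

theorem potential_V1_term_identity (M Q : ℝ) (hM : 0 < M) (hQ : |Q| < M)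
    (r : ℝ) (hr : 0 < r) :
    -(1/2) *
      (((1 - Q^2/M^2)*(r^2 - ((3*M + Real.sqrt (9*M^2 - 8*Q^2))/2)^2)
          + (Q^2/M^2)*(r^3 - ((3*M + Real.sqrt (9*M^2 - 8*Q^2))/2)^3)/r) / r^2) *
      deriv (fun s : ℝ =>
        (1 - 2*M/s + Q^2/s^2) * ((1/s^2)*(1 - 2*M/s + 6*Q^2/s^2))) r
    = (1/r^3) * (1 - ((3*M + Real.sqrt (9*M^2 - 8*Q^2))/2)/r)
        * (1 + ((3*M + Real.sqrt (9*M^2 - 8*Q^2))/2)/r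
            + (Q^2/M^2)*((3*M + Real.sqrt (9*M^2 - 8*Q^2))/2)^2/r^2)
        * (1 - 6*M/r + 8*M^2/r^2 + 14*Q^2/r^2 - 35*Q^2*M/r^3 + 18*Q^4/r^4) := by
  have hrne : r ≠ 0 := hr.ne'
  have hderiv : deriv (fun s : ℝ =>
        (1 - 2*M/s + Q^2/s^2) * ((1/s^2)*(1 - 2*M/s + 6*Q^2/s^2))) r
      = (2*M/r^2 - 2*Q^2/r^3) * ((1/r^2)*(1 - 2*M/r + 6*Q^2/r^2))
        + (1 - 2*M/r + Q^2/r^2) *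
          ((-(2:ℝ)/r^3)*(1 - 2*M/r + 6*Q^2/r^2) + (1/r^2)*(2*M/r^2 - 12*Q^2/r^3)) := by
    have I : HasDerivAt (fun s : ℝ => s⁻¹) (-(r^2)⁻¹) r := hasDerivAt_inv hrne
    have h1 : HasDerivAt (fun s : ℝ => 1 - 2*M*s⁻¹ + Q^2*s⁻¹^2)
        (0 - 2*M*(-(r^2)⁻¹) + Q^2*((2:ℕ)*r⁻¹^1*(-(r^2)⁻¹))) r := by
      exact (((hasDerivAt_const r (1:ℝ)).sub (I.const_mul (2*M))).add ((I.pow 2).const_mul (Q^2)))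
    have h2 : HasDerivAt (fun s : ℝ => s⁻¹^2 * (1 - 2*M*s⁻¹ + 6*Q^2*s⁻¹^2))
        (((2:ℕ)*r⁻¹^1*(-(r^2)⁻¹)) * (1 - 2*M*r⁻¹ + 6*Q^2*r⁻¹^2)
          + r⁻¹^2 * (0 - 2*M*(-(r^2)⁻¹) + 6*Q^2*((2:ℕ)*r⁻¹^1*(-(r^2)⁻¹)))) r := by
      exact (I.pow 2).mul (((hasDerivAt_const r (1:ℝ)).sub (I.const_mul (2*M))).add ((I.pow 2).const_mul (6*Q^2)))
    have h3 : HasDerivAt (fun s : ℝ => (1 - 2*M*s⁻¹ + Q^2*s⁻¹^2) * (s⁻¹^2 * (1 - 2*M*s⁻¹ + 6*Q^2*s⁻¹^2))) _ r := h1.mul h2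
    have hfe : (fun s : ℝ =>
        (1 - 2*M/s + Q^2/s^2) * ((1/s^2)*(1 - 2*M/s + 6*Q^2/s^2)))
        = (fun s : ℝ => (1 - 2*M*s⁻¹ + Q^2*s⁻¹^2) * (s⁻¹^2 * (1 - 2*M*s⁻¹ + 6*Q^2*s⁻¹^2))) := by
      funext s; ring
    rw [hfe, h3.deriv]
    field_simp
    ring
  rw [hderiv]
  set t := (3*M + Real.sqrt (9*M^2 - 8*Q^2))/2 with hT
  have hQM : Q^2 < M^2 := by
    have := abs_nonneg Q
    nlinarith [sq_abs Q]
  have hs : (Real.sqrt (9*M^2 - 8*Q^2))^2 = 9*M^2 - 8*Q^2 := by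
    rw [Real.sq_sqrt]; nlinarith
  have ht : t^2 - 3*M*t + 2*Q^2 = 0 := by
    rw [hT]; linear_combination hs/4
  have hMne : M ≠ 0 := hM.ne'
  field_simp
  ring_nf
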